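/- Fix n ≥ 1 and a real constant k. On the open set U = { (x,p) ∈ ℝⁿ × ℝⁿ : x_i ≠ 0 for all i }, define the vector fields X₁(x,p) = (0, −x), X₂(x,p) = (−x/2, p/2), and X₃(x,p) = (p, (k/x₁³, …, k/xₙ³)). Then their Lie brackets satisfy [X₁,X₃] = 2X₂, [X₁,X₂] = X₁, and [X₂,X₃] = X₃ at every point of U; hence X₁, X₂, X₃ span a Lie algebra of vector fields isomorphic to sl(2,ℝ). -/

import Mathlib

/-- The Lie bracket of two differentiable vector fields on a real normed space:
`[A,B](z) = DB(z)(A(z)) − DA(z)(B(z))`. -/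
noncomputable def vectorFieldBracket {E : Type*} [NormedAddCommGroup E]
    [NormedSpace ℝ E] (A B : E → E) (z : E) : E :=
  fderiv ℝ B z (A z) - fderiv ℝ A z (B z)

/-- The Vessiot–Guldberg vector fields `X₁ = (0,−x)`, `X₂ = (−x/2, p/2)`,
`X₃ = (p, (k/x₁³,…,k/xₙ³))` of the Smorodinsky–Winternitz oscillator satisfy
`[X₁,X₃] = 2X₂`, `[X₁,X₂] = X₁`, `[X₂,X₃] = X₃` on the set where all `xᵢ ≠ 0`;
hence they span a Lie algebra of vector fields isomorphic to `sl(2,ℝ)`. -/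
theorem smorodinsky_winternitz_vector_fields_sl2 (n : ℕ) (hn : 1 ≤ n) (k : ℝ)
    (X₁ X₂ X₃ : (Fin n → ℝ) × (Fin n → ℝ) → (Fin n → ℝ) × (Fin n → ℝ))
    (hX₁ : ∀ z, X₁ z = (0, -z.1))
    (hX₂ : ∀ z, X₂ z = (-((1 / 2 : ℝ) • z.1), (1 / 2 : ℝ) • z.2))
    (hX₃ : ∀ z, X₃ z = (z.2, fun i => k / (z.1 i) ^ 3))
    (z : (Fin n → ℝ) × (Fin n → ℝ)) (hz : ∀ i, z.1 i ≠ 0) :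
    vectorFieldBracket X₁ X₃ z = (2 : ℝ) • X₂ z ∧
    vectorFieldBracket X₁ X₂ z = X₁ z ∧
    vectorFieldBracket X₂ X₃ z = X₃ z := by
  classical
  set fst := ContinuousLinearMap.fst ℝ (Fin n → ℝ) (Fin n → ℝ) with hfst
  set snd := ContinuousLinearMap.snd ℝ (Fin n → ℝ) (Fin n → ℝ) with hsnd
  set L₁ := ContinuousLinearMap.prod (0 : ((Fin n → ℝ) × (Fin n → ℝ)) →L[ℝ] (Fin n → ℝ)) (-fst) with hL₁
  set L₂ := ContinuousLinearMap.prod (-((1/2 : ℝ) • fst)) ((1/2 : ℝ) • snd) with hL₂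
  set M : (Fin n → ℝ) →L[ℝ] (Fin n → ℝ) :=
    ContinuousLinearMap.pi (fun i => (-3 * k / (z.1 i)^4) • ContinuousLinearMap.proj i) with hM
  set L₃ := ContinuousLinearMap.prod snd (M.comp fst) with hL₃
  have hX₁' : X₁ = fun w : (Fin n → ℝ) × (Fin n → ℝ) => ((0 : Fin n → ℝ), -w.1) :=
    funext hX₁
  have hX₂' : X₂ = fun w : (Fin n → ℝ) × (Fin n → ℝ) =>
      (-((1 / 2 : ℝ) • w.1), (1 / 2 : ℝ) • w.2) := funext hX₂
  have hX₃' : X₃ = fun w : (Fin n → ℝ) × (Fin n → ℝ) =>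
      (w.2, fun i => k / (w.1 i) ^ 3) := funext hX₃
  have hD₁ : HasFDerivAt X₁ L₁ z := by
    have : X₁ = ⇑L₁ := by
      rw [hX₁']; funext w; rfl
    rw [this]; exact L₁.hasFDerivAt
  have hD₂ : HasFDerivAt X₂ L₂ z := by
    have : X₂ = ⇑L₂ := by
      rw [hX₂']; funext w; rfl
    rw [this]; exact L₂.hasFDerivAt
  have hD₃ : HasFDerivAt X₃ L₃ z := by
    rw [hX₃']
    apply HasFDerivAt.prodMk
    · exact snd.hasFDerivAt
    · rw [hasFDerivAt_pi']
      intro i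
      have h1 : HasFDerivAt (fun w : (Fin n → ℝ) × (Fin n → ℝ) => w.1 i)
          ((ContinuousLinearMap.proj i).comp fst) z :=
        ((ContinuousLinearMap.proj i).comp fst).hasFDerivAt
      have h2 := (h1.mul h1).mul h1
      have hne : z.1 i * z.1 i * z.1 i ≠ 0 :=
        mul_ne_zero (mul_ne_zero (hz i) (hz i)) (hz i)
      have h3 := (hasFDerivAt_inv' (𝕜 := ℝ) hne).comp z h2
      have h4 := h3.const_mul k
      have heq : (fun w : (Fin n → ℝ) × (Fin n → ℝ) =>
          k * (w.1 i * w.1 i * w.1 i)⁻¹) = fun w => k / (w.1 i)^3 := by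
        funext w; rw [div_eq_mul_inv, pow_succ, pow_two]
      simp only [Function.comp_def, Function.comp_apply, Pi.mul_apply] at h4
      rw [heq] at h4
      refine h4.congr_fderiv ?_
      ext v
      all_goals simp only [hL₃, hM, hfst, hsnd, ContinuousLinearMap.coe_comp', Function.comp_apply,
        ContinuousLinearMap.proj_apply, ContinuousLinearMap.coe_smul',
        Pi.smul_apply, smul_eq_mul, ContinuousLinearMap.prod_apply,
        ContinuousLinearMap.pi_apply, ContinuousLinearMap.add_apply,
        ContinuousLinearMap.neg_apply, ContinuousLinearMap.coe_fst',
        ContinuousLinearMap.coe_snd', Pi.add_apply,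
        ContinuousLinearMap.mulLeftRight_apply, ContinuousLinearMap.inl_apply,
        ContinuousLinearMap.inr_apply, ContinuousLinearMap.smul_apply]
      all_goals try field_simp [hz i]
      all_goals try ring
  have hf₁ := hD₁.fderiv
  have hf₂ := hD₂.fderiv
  have hf₃ := hD₃.fderiv
  refine ⟨?_, ?_, ?_⟩ <;>
    · simp only [vectorFieldBracket, hf₁, hf₂, hf₃, hX₁, hX₂, hX₃]
      refine Prod.ext ?_ ?_ <;>
        · funext i
          simp only [hL₁, hL₂, hL₃, hM, hfst, hsnd,
            ContinuousLinearMap.prod_apply, ContinuousLinearMap.coe_comp',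
            Function.comp_apply, ContinuousLinearMap.coe_fst',
            ContinuousLinearMap.coe_snd', ContinuousLinearMap.neg_apply,
            ContinuousLinearMap.coe_smul', ContinuousLinearMap.zero_apply,
            ContinuousLinearMap.pi_apply, ContinuousLinearMap.proj_apply,
            Pi.smul_apply, Pi.neg_apply, Pi.sub_apply, Pi.zero_apply,
            Prod.fst_sub, Prod.snd_sub, Prod.smul_fst, Prod.smul_snd,
            smul_eq_mul]
          first
          | rfl
          | (field_simp [hz i]; try ring)
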